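/- Closedness of the attractor fibres: for every t ∈ ℝ, the set A t is closed in E (IsClosed (A t)); consequently, being also bounded, each fibre A t is compact. -/

import Mathlib

open MeasureTheory Set Metric Pointwise
open scoped RealInnerProductSpace

noncomputable section

abbrev Euc (d : ℕ) : Type := EuclideanSpace ℝ (Fin d)

/-- The set of admissible controls: measurable functions with values in the closed unit ball. -/
def ctrlSet (d : ℕ) : Set (ℝ → Euc d) :=
  {ξ | Measurable ξ ∧ ∀ s, ‖ξ s‖ ≤ 1}

/-- The attractor fibre at time `t`. -/
def Afib (d : ℕ) (Ψ : ℝ → ℝ → (Euc d →L[ℝ] Euc d)) (ρ t : ℝ) : Set (Euc d) :=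
  {x | ∃ ξ ∈ ctrlSet d, x = ρ • ∫ s in Set.Iic t, Ψ t s (ξ s)}

/-- The reachable-set operator of the linear differential inclusion. -/
def reach (d : ℕ) (Ψ : ℝ → ℝ → (Euc d →L[ℝ] Euc d)) (ρ t t₀ : ℝ) (S : Set (Euc d)) :
    Set (Euc d) :=
  {y | ∃ x₀ ∈ S, ∃ ξ ∈ ctrlSet d, y = Ψ t t₀ x₀ + ρ • ∫ s in Set.Icc t₀ t, Ψ t s (ξ s)}

/-! ### Auxiliary development -/

open scoped ENNReal NNReal

/-- Weight density. -/
def dens (γ t : ℝ) : ℝ → ℝ≥0 := fun s => (Real.exp (γ * (s - t))).toNNReal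

/-- Weighted (finite) measure on `Iic t`. -/
def wm (γ t : ℝ) : Measure ℝ :=
  (volume.restrict (Iic t)).withDensity fun s => (dens γ t s : ℝ≥0∞)

lemma dens_meas (γ t : ℝ) : Measurable (dens γ t) := by
  unfold dens; fun_prop

lemma integrableOn_weight {γ : ℝ} (hγ : 0 < γ) (t : ℝ) :
    IntegrableOn (fun s => Real.exp (γ * (s - t))) (Iic t) := by
  have h1 : Integrable ((Iic (γ * t)).indicator Real.exp) := by
    rw [integrable_indicator_iff measurableSet_Iic]
    exact integrableOn_exp_Iic _
  have h2 := (integrable_comp_mul_left_iff ((Iic (γ * t)).indicator Real.exp) hγ.ne').2 h1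
  have h3 : (fun x => (Iic (γ*t)).indicator Real.exp (γ * x))
      = (Iic t).indicator (fun s => Real.exp (γ * s)) := by
    funext x
    by_cases hx : x ≤ t
    · rw [Set.indicator_of_mem (by simpa [mem_Iic] using (mul_le_mul_of_nonneg_left hx hγ.le)),
        Set.indicator_of_mem (mem_Iic.2 hx)]
    · rw [Set.indicator_of_notMem, Set.indicator_of_notMem (by simpa [mem_Iic] using hx)]
      simp only [mem_Iic, not_le] at hx ⊢
      exact (mul_lt_mul_iff_right₀ hγ).2 hx
  rw [h3, integrable_indicator_iff measurableSet_Iic] at h2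
  have h4 : IntegrableOn (fun s => Real.exp (γ * s) * Real.exp (-(γ * t))) (Iic t) :=
    h2.mul_const _
  refine h4.congr_fun (fun x _ => ?_) measurableSet_Iic
  beta_reduce; rw [← Real.exp_add]; ring_nf

lemma isFiniteMeasure_wm {γ : ℝ} (hγ : 0 < γ) (t : ℝ) : IsFiniteMeasure (wm γ t) := by
  constructor
  rw [wm, withDensity_apply _ MeasurableSet.univ, Measure.restrict_univ]
  have h := (integrableOn_weight hγ t).2
  rw [hasFiniteIntegral_iff_norm] at h
  have hle : ∀ᵐ s ∂(volume.restrict (Iic t)),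
      ((dens γ t s : ℝ≥0∞)) ≤ ENNReal.ofReal ‖Real.exp (γ * (s - t))‖ := by
    filter_upwards with s
    simp [dens, Real.norm_eq_abs, abs_of_pos (Real.exp_pos _), ENNReal.ofReal]
  exact lt_of_le_of_lt (lintegral_mono_ae hle) h

variable {d : ℕ}

/-- The test vectors. -/
def wp (Ψ : ℝ → ℝ → (Euc d →L[ℝ] Euc d)) (γ t : ℝ) (p : Euc d) : ℝ → Euc d :=
  fun s => Real.exp (γ * (t - s)) • (ContinuousLinearMap.adjoint (Ψ t s) p)

lemma ae_wm_le (γ t : ℝ) : ∀ᵐ s ∂(wm γ t), s ≤ t := by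
  have h1 : ∀ᵐ s ∂(volume.restrict (Iic t)), s ≤ t := by
    filter_upwards [ae_restrict_mem measurableSet_Iic] with s hs using hs
  exact h1.filter_mono (withDensity_absolutelyContinuous _ _).ae_le

lemma continuous_wp (Ψ : ℝ → ℝ → (Euc d →L[ℝ] Euc d)) (γ t : ℝ)
    (hΨc : Continuous fun q : ℝ × ℝ => Ψ q.1 q.2) (p : Euc d) :
    Continuous (wp Ψ γ t p) := by
  have h1 : Continuous fun s : ℝ => Ψ t s := hΨc.comp (continuous_const.prodMk continuous_id)
  have h2 : Continuous fun s : ℝ => ContinuousLinearMap.adjoint (Ψ t s) :=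
    (ContinuousLinearMap.adjoint (𝕜 := ℝ) (E := Euc d) (F := Euc d)).continuous.comp h1
  exact ((Real.continuous_exp.comp (by fun_prop)).smul (h2.clm_apply continuous_const))

lemma memℒp_wp (Ψ : ℝ → ℝ → (Euc d →L[ℝ] Euc d)) (γ t : ℝ) {K : ℝ} (hγ : 0 < γ)
    (hΨc : Continuous fun q : ℝ × ℝ => Ψ q.1 q.2)
    (hstab : ∀ s u : ℝ, s ≤ u → ‖Ψ u s‖ ≤ K * Real.exp (-γ * (u - s)))
    (p : Euc d) : MemLp (wp Ψ γ t p) 2 (wm γ t) := by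
  haveI := isFiniteMeasure_wm hγ t
  refine MemLp.of_bound ((continuous_wp Ψ γ t hΨc p).aestronglyMeasurable) (K * ‖p‖) ?_
  filter_upwards [ae_wm_le γ t] with s hs
  have h1 : ‖ContinuousLinearMap.adjoint (Ψ t s) p‖ ≤ (K * Real.exp (-γ * (t - s))) * ‖p‖ := by
    refine le_trans (ContinuousLinearMap.le_opNorm _ _) ?_
    refine mul_le_mul_of_nonneg_right ?_ (norm_nonneg p)
    rw [ContinuousLinearMap.adjoint.norm_map]
    exact hstab s t hs
  have h2 : ‖wp Ψ γ t p s‖ = Real.exp (γ * (t - s)) * ‖ContinuousLinearMap.adjoint (Ψ t s) p‖ := by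
    rw [wp, norm_smul, Real.norm_eq_abs, abs_of_pos (Real.exp_pos _)]
  rw [h2]
  calc Real.exp (γ * (t - s)) * ‖ContinuousLinearMap.adjoint (Ψ t s) p‖
      ≤ Real.exp (γ * (t - s)) * ((K * Real.exp (-γ * (t - s))) * ‖p‖) :=
        mul_le_mul_of_nonneg_left h1 (Real.exp_pos _).le
    _ = (Real.exp (γ * (t - s)) * Real.exp (-γ * (t - s))) * (K * ‖p‖) := by ring
    _ = K * ‖p‖ := by rw [← Real.exp_add]; ring_nf; rw [Real.exp_zero, one_mul]

lemma meas_traj (Ψ : ℝ → ℝ → (Euc d →L[ℝ] Euc d)) (t : ℝ)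
    (hΨc : Continuous fun q : ℝ × ℝ => Ψ q.1 q.2)
    {ξ : ℝ → Euc d} (hξm : Measurable ξ) : Measurable fun s => Ψ t s (ξ s) := by
  have h1 : Continuous fun s : ℝ => Ψ t s := hΨc.comp (continuous_const.prodMk continuous_id)
  exact isBoundedBilinearMap_apply.continuous.measurable.comp (h1.measurable.prodMk hξm)

lemma integrableOn_traj (Ψ : ℝ → ℝ → (Euc d →L[ℝ] Euc d)) (γ t : ℝ) {K : ℝ} (hγ : 0 < γ)
    (hΨc : Continuous fun q : ℝ × ℝ => Ψ q.1 q.2)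
    (hstab : ∀ s u : ℝ, s ≤ u → ‖Ψ u s‖ ≤ K * Real.exp (-γ * (u - s)))
    {ξ : ℝ → Euc d} (hξm : Measurable ξ) (hξb : ∀ s, ‖ξ s‖ ≤ 1) :
    IntegrableOn (fun s => Ψ t s (ξ s)) (Iic t) := by
  refine Integrable.mono' (((integrableOn_weight hγ t).const_mul K))
    (meas_traj Ψ t hΨc hξm).aestronglyMeasurable ?_
  filter_upwards [ae_restrict_mem measurableSet_Iic] with s hs
  calc ‖Ψ t s (ξ s)‖ ≤ ‖Ψ t s‖ * ‖ξ s‖ := ContinuousLinearMap.le_opNorm _ _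
    _ ≤ ‖Ψ t s‖ * 1 := mul_le_mul_of_nonneg_left (hξb s) (norm_nonneg _)
    _ = ‖Ψ t s‖ := mul_one _
    _ ≤ K * Real.exp (-γ * (t - s)) := hstab s t hs
    _ = K * Real.exp (γ * (s - t)) := by ring_nf

lemma inner_W_eq (Ψ : ℝ → ℝ → (Euc d →L[ℝ] Euc d)) (γ t : ℝ) {K : ℝ} (hγ : 0 < γ)
    (hΨc : Continuous fun q : ℝ × ℝ => Ψ q.1 q.2)
    (hstab : ∀ s u : ℝ, s ≤ u → ‖Ψ u s‖ ≤ K * Real.exp (-γ * (u - s)))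
    {ξ : ℝ → Euc d} (hξm : Measurable ξ) (hξb : ∀ s, ‖ξ s‖ ≤ 1)
    (ζ : Lp (Euc d) 2 (wm γ t)) (hζ : (ζ : ℝ → Euc d) =ᵐ[wm γ t] ξ) (p : Euc d) :
    ⟪ζ, (memℒp_wp Ψ γ t hγ hΨc hstab p).toLp (wp Ψ γ t p)⟫
      = ⟪∫ s in Iic t, Ψ t s (ξ s), p⟫ := by
  rw [MeasureTheory.L2.inner_def]
  have h1 : (∫ a, ⟪ζ a, ((memℒp_wp Ψ γ t hγ hΨc hstab p).toLp (wp Ψ γ t p) : ℝ → Euc d) a⟫ ∂(wm γ t))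
      = ∫ a, ⟪ξ a, wp Ψ γ t p a⟫ ∂(wm γ t) := by
    refine integral_congr_ae ?_
    filter_upwards [hζ, (memℒp_wp Ψ γ t hγ hΨc hstab p).coeFn_toLp] with a ha hb
    rw [ha, hb]
  rw [h1, wm, integral_withDensity_eq_integral_smul (dens_meas γ t)]
  have h2 : (fun a => dens γ t a • ⟪ξ a, wp Ψ γ t p a⟫)
      = fun a => ⟪Ψ t a (ξ a), p⟫ := by
    funext a
    simp only [dens]
    rw [NNReal.smul_def, Real.coe_toNNReal _ (Real.exp_pos _).le, wp,
        real_inner_smul_right, ContinuousLinearMap.adjoint_inner_right,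
        smul_eq_mul, ← mul_assoc, ← Real.exp_add]
    have hz : γ * (a - t) + γ * (t - a) = 0 := by ring
    rw [hz, Real.exp_zero, one_mul]
  rw [h2]
  have h3 : ∫ s in Iic t, ⟪Ψ t s (ξ s), p⟫ = ∫ s in Iic t, (innerSL ℝ p) (Ψ t s (ξ s)) := by
    refine integral_congr_ae (Filter.Eventually.of_forall fun s => ?_)
    simp only [innerSL_apply_apply]
    exact real_inner_comm _ _
  rw [h3, ContinuousLinearMap.integral_comp_comm _ (integrableOn_traj Ψ γ t hγ hΨc hstab hξm hξb)]
  simp only [innerSL_apply_apply]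
  exact real_inner_comm _ _

/-- The test vectors, as elements of `L²`. -/
def Wvec (Ψ : ℝ → ℝ → (Euc d →L[ℝ] Euc d)) (γ t : ℝ) {K : ℝ} (hγ : 0 < γ)
    (hΨc : Continuous fun q : ℝ × ℝ => Ψ q.1 q.2)
    (hstab : ∀ s u : ℝ, s ≤ u → ‖Ψ u s‖ ≤ K * Real.exp (-γ * (u - s)))
    (p : Euc d) : Lp (Euc d) 2 (wm γ t) :=
  (memℒp_wp Ψ γ t hγ hΨc hstab p).toLp (wp Ψ γ t p)

/-- Upper bound functional. -/
def cb (d : ℕ) (γ t : ℝ) (w : Lp (Euc d) 2 (wm γ t)) : ℝ :=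
  ∫ s, ‖(w : ℝ → Euc d) s‖ ∂(wm γ t)

/-- Radius. -/
def Rrad (γ t : ℝ) : ℝ :=
  (((wm γ t) univ ^ ((2 : ℝ≥0∞).toReal)⁻¹) * ENNReal.ofReal 1).toReal

/-- The weak-star compact set of admissible functionals. -/
def Bst (d : ℕ) (γ t : ℝ) : Set (WeakDual ℝ (Lp (Euc d) 2 (wm γ t))) :=
  (WeakDual.toStrongDual ⁻¹' closedBall 0 (Rrad γ t)) ∩
    ⋂ w : Lp (Euc d) 2 (wm γ t), {φ | φ w ≤ cb d γ t w}

/-- The output map. -/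
def Tst (Ψ : ℝ → ℝ → (Euc d →L[ℝ] Euc d)) (γ t : ℝ) {K : ℝ} (hγ : 0 < γ)
    (hΨc : Continuous fun q : ℝ × ℝ => Ψ q.1 q.2)
    (hstab : ∀ s u : ℝ, s ≤ u → ‖Ψ u s‖ ≤ K * Real.exp (-γ * (u - s))) (ρ : ℝ) :
    WeakDual ℝ (Lp (Euc d) 2 (wm γ t)) → Euc d :=
  fun φ => ρ • ∑ i : Fin d,
    (φ (Wvec Ψ γ t hγ hΨc hstab (EuclideanSpace.basisFun (Fin d) ℝ i))) •
      (EuclideanSpace.basisFun (Fin d) ℝ i : Euc d)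

lemma bst_compact (d : ℕ) (γ t : ℝ) : IsCompact (Bst d γ t) := by
  refine (WeakDual.isCompact_closedBall (0 : StrongDual ℝ (Lp (Euc d) 2 (wm γ t)))
    (Rrad γ t)).inter_right ?_
  refine isClosed_iInter fun w => ?_
  exact IsClosed.preimage (WeakDual.eval_continuous w) isClosed_Iic

lemma tst_continuous (Ψ : ℝ → ℝ → (Euc d →L[ℝ] Euc d)) (γ t : ℝ) {K : ℝ} (hγ : 0 < γ)
    (hΨc : Continuous fun q : ℝ × ℝ => Ψ q.1 q.2)
    (hstab : ∀ s u : ℝ, s ≤ u → ‖Ψ u s‖ ≤ K * Real.exp (-γ * (u - s))) (ρ : ℝ) :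
    Continuous (Tst Ψ γ t hγ hΨc hstab ρ) := by
  refine Continuous.const_smul ?_ ρ
  exact continuous_finset_sum _ fun i _ =>
    (WeakDual.eval_continuous _).smul continuous_const

/-- `Tst` applied to the functional induced by a control. -/
lemma tst_eq (Ψ : ℝ → ℝ → (Euc d →L[ℝ] Euc d)) (γ t : ℝ) {K : ℝ} (hγ : 0 < γ)
    (hΨc : Continuous fun q : ℝ × ℝ => Ψ q.1 q.2)
    (hstab : ∀ s u : ℝ, s ≤ u → ‖Ψ u s‖ ≤ K * Real.exp (-γ * (u - s))) (ρ : ℝ)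
    {ξ : ℝ → Euc d} (hξm : Measurable ξ) (hξb : ∀ s, ‖ξ s‖ ≤ 1)
    (φ : WeakDual ℝ (Lp (Euc d) 2 (wm γ t)))
    (ζ : Lp (Euc d) 2 (wm γ t)) (hζ : (ζ : ℝ → Euc d) =ᵐ[wm γ t] ξ)
    (hφ : ∀ w, φ w = ⟪ζ, w⟫) :
    Tst Ψ γ t hγ hΨc hstab ρ φ = ρ • ∫ s in Iic t, Ψ t s (ξ s) := by
  rw [Tst]
  congr 1
  have h1 : ∀ i : Fin d,
      φ (Wvec Ψ γ t hγ hΨc hstab (EuclideanSpace.basisFun (Fin d) ℝ i))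
        = ⟪(EuclideanSpace.basisFun (Fin d) ℝ i : Euc d), ∫ s in Iic t, Ψ t s (ξ s)⟫ := by
    intro i
    rw [hφ, Wvec, inner_W_eq Ψ γ t hγ hΨc hstab hξm hξb ζ hζ]
    exact real_inner_comm _ _
  calc (∑ i : Fin d,
      (φ (Wvec Ψ γ t hγ hΨc hstab (EuclideanSpace.basisFun (Fin d) ℝ i))) •
        (EuclideanSpace.basisFun (Fin d) ℝ i : Euc d))
      = ∑ i : Fin d, ⟪(EuclideanSpace.basisFun (Fin d) ℝ i : Euc d),
          ∫ s in Iic t, Ψ t s (ξ s)⟫ • (EuclideanSpace.basisFun (Fin d) ℝ i : Euc d) := by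
        refine Finset.sum_congr rfl fun i _ => ?_
        rw [h1 i]
    _ = ∫ s in Iic t, Ψ t s (ξ s) :=
        (EuclideanSpace.basisFun (Fin d) ℝ).sum_repr' _

theorem attractor_closed_compact
    (d : ℕ) (hd : 1 ≤ d)
    (L : ℝ → (Euc d →L[ℝ] Euc d)) (hL : Continuous L)
    (Ψ : ℝ → ℝ → (Euc d →L[ℝ] Euc d))
    (hΨc : Continuous fun p : ℝ × ℝ => Ψ p.1 p.2)
    (hΨid : ∀ t : ℝ, Ψ t t = ContinuousLinearMap.id ℝ (Euc d))
    (hΨcoc : ∀ t s r : ℝ, (Ψ t s).comp (Ψ s r) = Ψ t r)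
    (hΨd : ∀ (s : ℝ) (x : Euc d) (t : ℝ), HasDerivAt (fun τ => Ψ τ s x) (L t (Ψ t s x)) t)
    (K γ : ℝ) (hK : 1 ≤ K) (hγ : 0 < γ)
    (hstab : ∀ s t : ℝ, s ≤ t → ‖Ψ t s‖ ≤ K * Real.exp (-γ * (t - s)))
    (ρ : ℝ) (hρ : 0 < ρ) :
    ∀ t : ℝ, IsClosed (Afib d Ψ ρ t) ∧ IsCompact (Afib d Ψ ρ t) := by
  intro t
  haveI := isFiniteMeasure_wm hγ t
  -- The main identification
  have key : Afib d Ψ ρ t = Tst Ψ γ t hγ hΨc hstab ρ '' Bst d γ t := by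
    apply Subset.antisymm
    · -- forward inclusion
      rintro x ⟨ξ, ⟨hξm, hξb⟩, rfl⟩
      have hmem : MemLp ξ 2 (wm γ t) :=
        MemLp.of_bound hξm.aestronglyMeasurable 1 (Filter.Eventually.of_forall hξb)
      set ζ : Lp (Euc d) 2 (wm γ t) := hmem.toLp ξ with hζdef
      have hζ : (ζ : ℝ → Euc d) =ᵐ[wm γ t] ξ := hmem.coeFn_toLp
      set φ : WeakDual ℝ (Lp (Euc d) 2 (wm γ t)) :=
        StrongDual.toWeakDual (InnerProductSpace.toDual ℝ _ ζ) with hφdef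
      have hφap : ∀ w, φ w = ⟪ζ, w⟫ := fun w => InnerProductSpace.toDual_apply_apply
      refine ⟨φ, ⟨?_, ?_⟩, ?_⟩
      · -- ball bound
        simp only [mem_preimage, mem_closedBall, dist_zero_right]
        have h1 : ‖WeakDual.toStrongDual φ‖ = ‖ζ‖ := by
          simp [hφdef]
        rw [h1, hζdef, Lp.norm_toLp]
        refine ENNReal.toReal_mono ?_ ?_
        · refine ENNReal.mul_ne_top ?_ (by simp)
          exact (ENNReal.rpow_lt_top_of_nonneg (by positivity)
            (measure_ne_top _ _)).ne
        · exact eLpNorm_le_of_ae_bound (Filter.Eventually.of_forall hξb)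
      · -- half-space bounds
        refine mem_iInter.2 fun w => ?_
        simp only [mem_setOf_eq]
        rw [hφap w, MeasureTheory.L2.inner_def]
        have hint1 : Integrable (fun a => ⟪(ζ : ℝ → Euc d) a, (w : ℝ → Euc d) a⟫) (wm γ t) :=
          MeasureTheory.L2.integrable_inner ζ w
        have hint2 : Integrable (fun a => ‖(w : ℝ → Euc d) a‖) (wm γ t) := by
          have := ((Lp.memLp w).mono_exponent (by norm_num : (1 : ℝ≥0∞) ≤ 2))
          exact (memLp_one_iff_integrable.mp this).norm
        refine integral_mono_ae hint1 hint2 ?_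
        filter_upwards [hζ] with a ha
        calc ⟪(ζ : ℝ → Euc d) a, (w : ℝ → Euc d) a⟫
            ≤ ‖(ζ : ℝ → Euc d) a‖ * ‖(w : ℝ → Euc d) a‖ := real_inner_le_norm _ _
          _ ≤ 1 * ‖(w : ℝ → Euc d) a‖ := by
              refine mul_le_mul_of_nonneg_right ?_ (norm_nonneg _)
              rw [ha]; exact hξb a
          _ = ‖(w : ℝ → Euc d) a‖ := one_mul _
      · exact tst_eq Ψ γ t hγ hΨc hstab ρ hξm hξb φ ζ hζ hφap
    · -- reverse inclusion
      rintro x ⟨φ, ⟨hball, hhalf⟩, rfl⟩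
      set ζ : Lp (Euc d) 2 (wm γ t) :=
        (InnerProductSpace.toDual ℝ _).symm (WeakDual.toStrongDual φ) with hζdef
      have hφap : ∀ w, φ w = ⟪ζ, w⟫ := fun w => by
        rw [hζdef, InnerProductSpace.toDual_symm_apply]
        rfl
      -- a measurable representative
      obtain ⟨g, hgsm, hgae⟩ : ∃ g : ℝ → Euc d, StronglyMeasurable g ∧
          (ζ : ℝ → Euc d) =ᵐ[wm γ t] g :=
        ⟨(Lp.aestronglyMeasurable ζ).mk _, (Lp.aestronglyMeasurable ζ).stronglyMeasurable_mk,
          (Lp.aestronglyMeasurable ζ).ae_eq_mk⟩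
      have hgm : Measurable g := hgsm.measurable
      -- the truncation argument: ‖g‖ ≤ 1 a.e.
      have hae1 : ∀ᵐ a ∂(wm γ t), ‖g a‖ ≤ 1 := by
        set A : Set ℝ := {a | 1 < ‖g a‖} with hA
        have hAm : MeasurableSet A := measurableSet_lt measurable_const hgm.norm
        have hmemg : MemLp g 2 (wm γ t) := (Lp.memLp ζ).ae_eq hgae
        have hmemu : MemLp (A.indicator g) 2 (wm γ t) := hmemg.indicator hAm
        set U : Lp (Euc d) 2 (wm γ t) := hmemu.toLp _ with hUdef
        have hUae : (U : ℝ → Euc d) =ᵐ[wm γ t] A.indicator g := hmemu.coeFn_toLp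
        have hsq : φ U = ∫ a in A, ‖g a‖ ^ 2 ∂(wm γ t) := by
          rw [hφap U, MeasureTheory.L2.inner_def, ← integral_indicator hAm]
          refine integral_congr_ae ?_
          filter_upwards [hgae, hUae] with a ha hU
          rw [ha, hU]
          by_cases haA : a ∈ A
          · rw [Set.indicator_of_mem haA, Set.indicator_of_mem haA,
              real_inner_self_eq_norm_sq]
          · rw [Set.indicator_of_notMem haA, Set.indicator_of_notMem haA, inner_zero_right]
        have hcb : cb d γ t U = ∫ a in A, ‖g a‖ ∂(wm γ t) := by
          rw [cb, ← integral_indicator hAm]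
          refine integral_congr_ae ?_
          filter_upwards [hUae] with a hU
          rw [hU, norm_indicator_eq_indicator_norm]
        have hineq : (∫ a in A, ‖g a‖ ^ 2 ∂(wm γ t)) ≤ ∫ a in A, ‖g a‖ ∂(wm γ t) := by
          rw [← hsq, ← hcb]
          exact mem_iInter.1 hhalf U
        -- integrabilities
        have hint_sq : Integrable (fun a => ‖g a‖ ^ 2) (wm γ t) := by
          have h0 : Integrable (fun a => ⟪(ζ : ℝ → Euc d) a, (ζ : ℝ → Euc d) a⟫) (wm γ t) :=
            MeasureTheory.L2.integrable_inner ζ ζ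
          refine h0.congr ?_
          filter_upwards [hgae] with a ha
          rw [ha, real_inner_self_eq_norm_sq]
        have hint_n : Integrable (fun a => ‖g a‖) (wm γ t) := by
          have := hmemg.mono_exponent (by norm_num : (1 : ℝ≥0∞) ≤ 2)
          exact (memLp_one_iff_integrable.mp this).norm
        have hnn : ∀ᵐ a ∂(wm γ t).restrict A, 0 ≤ ‖g a‖ ^ 2 - ‖g a‖ := by
          rw [ae_restrict_iff' hAm]
          filter_upwards with a haA
          have h1a : 1 < ‖g a‖ := haA
          nlinarith [norm_nonneg (g a)]
        have hzero : ∫ a in A, (‖g a‖ ^ 2 - ‖g a‖) ∂(wm γ t) = 0 := by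
          have hle : ∫ a in A, (‖g a‖ ^ 2 - ‖g a‖) ∂(wm γ t) ≤ 0 := by
            rw [integral_sub (hint_sq.integrableOn) (hint_n.integrableOn)]
            linarith
          have hge : 0 ≤ ∫ a in A, (‖g a‖ ^ 2 - ‖g a‖) ∂(wm γ t) :=
            integral_nonneg_of_ae hnn
          exact le_antisymm hle hge
        have hae0 : (fun a => ‖g a‖ ^ 2 - ‖g a‖) =ᵐ[(wm γ t).restrict A] 0 := by
          refine (integral_eq_zero_iff_of_nonneg_ae ?_ ?_).mp hzero
          · exact hnn
          · exact (hint_sq.sub hint_n).integrableOn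
        have hae0' : ∀ᵐ a ∂(wm γ t), a ∈ A → (‖g a‖ ^ 2 - ‖g a‖) = 0 :=
          (ae_restrict_iff' hAm).mp hae0
        filter_upwards [hae0'] with a ha
        by_contra hcon
        push_neg at hcon
        have haA : a ∈ A := hcon
        have h1 : 1 < ‖g a‖ := hcon
        have := ha haA
        nlinarith
      -- define the control
      set ξ : ℝ → Euc d := fun s => if ‖g s‖ ≤ 1 then g s else 0 with hξdef
      have hξm : Measurable ξ := by
        refine Measurable.ite ?_ hgm measurable_const
        exact measurableSet_le hgm.norm measurable_const
      have hξb : ∀ s, ‖ξ s‖ ≤ 1 := by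
        intro s
        rw [hξdef]
        by_cases hs : ‖g s‖ ≤ 1
        · simpa [hs] using hs
        · simp [hs]
      have hζξ : (ζ : ℝ → Euc d) =ᵐ[wm γ t] ξ := by
        filter_upwards [hgae, hae1] with a ha hb
        rw [ha, hξdef]
        simp [hb]
      refine ⟨ξ, ⟨hξm, hξb⟩, ?_⟩
      exact tst_eq Ψ γ t hγ hΨc hstab ρ hξm hξb φ ζ hζξ hφap
  constructor
  · rw [key]
    exact ((bst_compact d γ t).image (tst_continuous Ψ γ t hγ hΨc hstab ρ)).isClosed
  · rw [key]
    exact (bst_compact d γ t).image (tst_continuous Ψ γ t hγ hΨc hstab ρ)
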